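/- Let X be a quandle, G_X its enveloping group, G an abelian group with a left G_X-action by automorphisms, and κ : X × X → G any family. Let w be a braid word on k strands, acting on pairs (color vector, bead vector) in X^k × G^k as follows: σ_j replaces (x_j, x_{j+1}) by (x_{j+1}, x_j * x_{j+1}) and (a_j, a_{j+1}) by (a_{j+1}, x_{j+1}·a_j + a_{j+1} − (x_j*x_{j+1})·a_{j+1} + κ_{x_j,x_{j+1}}), and σ_j^{−1} applies the inverse transformation. Suppose a coloring of the closed braid is given, i.e. a bottom color vector x⃗ ∈ X^k whose induced top color vector equals x⃗, and suppose this coloring extends to the extension quandle G ×_α X, i.e. there is a⃗ ∈ G^k such that w sends (x⃗, a⃗) to (x⃗, a⃗). Then the sum over all letters of w of the Boltzmann weights is zero, where the Boltzmann weight of a letter σ_j^{ε} with color vector x⃗' immediately below it is ε·(x'_k·…·x'_{j+2})·κ_{u,v}, with (u,v) = (x'_j, x'_{j+1}) if ε = +1 and (u,v) = (x'_{j+1} \bar{*} x'_j, x'_j) if ε = −1. In other words, a coloring that extends to the extension contributes a trivial term to the generalized quandle cocycle invariant. -/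

import Mathlib

open Quandles

/-- The canonical map from a quandle to its enveloping group. -/
def iota (X : Type*) [Quandle X] (x : X) : Rack.EnvelGroup X := Rack.toEnvelGroup X x

/-- The bead transformation with 2-cochain `κ` of the braid generator `σ_j` (strands are
indexed `0, 1, 2, …`): colors transform by `(x_j, x_{j+1}) ↦ (x_{j+1}, x_j * x_{j+1})`
(the paper's `x_j * x_{j+1}` is Mathlib's `x_{j+1} ◃ x_j`), and beads by
`(a_j,a_{j+1}) ↦ (a_{j+1}, x_{j+1}·a_j + a_{j+1} − (x_j*x_{j+1})·a_{j+1} + κ_{x_j,x_{j+1}})`. -/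
def posStep {X G : Type*} [Quandle X] [AddCommGroup G]
    [DistribMulAction (Rack.EnvelGroup X) G] (κ : X → X → G)
    (j : ℕ) (s : (ℕ → X) × (ℕ → G)) : (ℕ → X) × (ℕ → G) :=
  (Function.update (Function.update s.1 j (s.1 (j + 1))) (j + 1) (s.1 (j + 1) ◃ s.1 j),
   Function.update (Function.update s.2 j (s.2 (j + 1))) (j + 1)
     (iota X (s.1 (j + 1)) • s.2 j + s.2 (j + 1) -
       iota X (s.1 (j + 1) ◃ s.1 j) • s.2 (j + 1) + κ (s.1 j) (s.1 (j + 1))))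

/-- Transformation associated to a braid word, applied letter by letter from bottom to
top; a letter `(j, true)` is `σ_j` and `(j, false)` is `σ_j⁻¹`. -/
def wordAction {σ : Type*} (pos neg : ℕ → σ → σ) : List (ℕ × Bool) → σ → σ
  | [], s => s
  | l :: w, s => wordAction pos neg w ((if l.2 then pos l.1 else neg l.1) s)

/-- The coefficient `x_{k-1}·x_{k-2}·…·x_{i+1}` (descending, in the enveloping group)
of the `i`-th bead in the weighted sum on `k` strands. -/
def coeff {X : Type*} [Quandle X] (k i : ℕ) (x : ℕ → X) : Rack.EnvelGroup X :=
  ((List.range (k - 1 - i)).map fun m => iota X (x (k - 1 - m))).prod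

/-- The weighted sum `WS_{x⃗}(a⃗) = Σ_i (x_{k-1}·…·x_{i+1})·a_i`. -/
def weightedSum {X G : Type*} [Quandle X] [AddCommGroup G]
    [DistribMulAction (Rack.EnvelGroup X) G]
    (k : ℕ) (s : (ℕ → X) × (ℕ → G)) : G :=
  ∑ i ∈ Finset.range k, coeff k i s.1 • s.2 i

/-- The Boltzmann weight of a letter `σ_j^ε` whose color vector immediately below it is
`x⃗`:  `ε·(x_{k-1}·…·x_{j+2})·κ_{u,v}` with `(u,v) = (x_j, x_{j+1})` if `ε = +1` and
`(u,v) = (x_{j+1} \bar{*} x_j, x_j)` if `ε = −1` (the paper's `c \bar{*} b` is Mathlib's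
`b ◃⁻¹ c`). -/
def letterWeight {X G : Type*} [Quandle X] [AddCommGroup G]
    [DistribMulAction (Rack.EnvelGroup X) G] (κ : X → X → G)
    (k : ℕ) (x : ℕ → X) : ℕ × Bool → G
  | (j, true) => coeff k (j + 1) x • κ (x j) (x (j + 1))
  | (j, false) => -(coeff k (j + 1) x • κ (x j ◃⁻¹ x (j + 1)) (x j))

/-- The sum of the Boltzmann weights of all the letters of a braid word, starting from a
given bottom state. -/
def totalWeight {X G : Type*} [Quandle X] [AddCommGroup G]
    [DistribMulAction (Rack.EnvelGroup X) G] (κ : X → X → G)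
    (pos neg : ℕ → (ℕ → X) × (ℕ → G) → (ℕ → X) × (ℕ → G)) (k : ℕ) :
    List (ℕ × Bool) → (ℕ → X) × (ℕ → G) → G
  | [], _ => 0
  | l :: w, s =>
      letterWeight κ k s.1 l +
        totalWeight κ pos neg k w ((if l.2 then pos l.1 else neg l.1) s)


section Aux

variable {X G : Type*} [Quandle X] [AddCommGroup G]
  [DistribMulAction (Rack.EnvelGroup X) G] (κ : X → X → G)

lemma iota_act (x y : X) : iota X (x ◃ y) = iota X x * iota X y * (iota X x)⁻¹ :=
  (Rack.toEnvelGroup X).map_act'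

lemma coeff_congr {k i : ℕ} {x y : ℕ → X} (h : ∀ m, i < m → x m = y m) :
    coeff k i x = coeff k i y := by
  unfold coeff
  congr 1
  apply List.map_congr_left
  intro m hm
  rw [List.mem_range] at hm
  rw [h _ (by omega)]

lemma coeff_succ {k j : ℕ} (h : j + 2 ≤ k) (x : ℕ → X) :
    coeff k j x = coeff k (j + 1) x * iota X (x (j + 1)) := by
  unfold coeff
  have h1 : k - 1 - j = (k - 1 - (j + 1)) + 1 := by omega
  rw [h1, List.range_succ, List.map_append, List.prod_append]
  have h2 : k - 1 - (k - 1 - (j + 1)) = j + 1 := by omega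
  simp [h2]

lemma coeff_split {k i p : ℕ} (hip : i ≤ p) (hp : p ≤ k - 1) (x : ℕ → X) :
    coeff k i x = coeff k p x *
      ((List.range (p - i)).map fun m => iota X (x (p - m))).prod := by
  unfold coeff
  have h1 : k - 1 - i = (k - 1 - p) + (p - i) := by omega
  rw [h1, List.range_add, List.map_append, List.prod_append]
  congr 1
  rw [List.map_map]
  congr 1
  apply List.map_congr_left
  intro m hm
  rw [List.mem_range] at hm
  simp only [Function.comp_apply]
  have e : k - 1 - (k - 1 - p + m) = p - m := by omega
  rw [e]

lemma coeff_eq_of_braid {k j : ℕ} (h : j + 2 ≤ k) {x x' : ℕ → X}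
    (htop : ∀ m, j + 1 < m → x' m = x m)
    (hj1 : x' (j + 1) = x (j + 1) ◃ x j) (hj : x' j = x (j + 1))
    (hlow : ∀ m, m < j → x' m = x m) :
    ∀ i, i < j → coeff k i x' = coeff k i x := by
  intro i hi
  rw [coeff_split (p := j + 1) (by omega) (by omega) x',
    coeff_split (p := j + 1) (by omega) (by omega) x,
    coeff_congr (i := j + 1) htop]
  congr 1
  have h2 : j + 1 - i = (j - 1 - i) + 1 + 1 := by omega
  have key : ∀ z : ℕ → X,
      ((List.range ((j - 1 - i) + 1 + 1)).map fun m => iota X (z (j + 1 - m))) =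
        iota X (z (j + 1)) :: iota X (z j) ::
          ((List.range (j - 1 - i)).map fun m => iota X (z (j - 1 - m))) := by
    intro z
    rw [List.range_succ_eq_map, List.range_succ_eq_map]
    simp only [List.map_cons, List.map_map]
    congr 1
    congr 1
    apply List.map_congr_left
    intro a ha
    have e : j + 1 - (a + 1 + 1) = j - 1 - a := by omega
    simp only [Function.comp_apply, Nat.succ_eq_add_one, e]
  have htail : ((List.range (j - 1 - i)).map fun m => iota X (x' (j - 1 - m))) =
      ((List.range (j - 1 - i)).map fun m => iota X (x (j - 1 - m))) := by
    apply List.map_congr_left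
    intro m hm
    rw [hlow _ (by omega)]
  rw [h2, key, key, List.prod_cons, List.prod_cons, hj1, hj, iota_act, htail]
  simp [mul_assoc]

lemma weightedSum_posStep {k j : ℕ} (h : j + 2 ≤ k) (s : (ℕ → X) × (ℕ → G)) :
    weightedSum k (posStep κ j s) =
      weightedSum k s + letterWeight κ k s.1 (j, true) := by
  obtain ⟨x, a⟩ := s
  set x' : ℕ → X :=
    Function.update (Function.update x j (x (j + 1))) (j + 1) (x (j + 1) ◃ x j) with hx'
  set a' : ℕ → G :=
    Function.update (Function.update a j (a (j + 1))) (j + 1)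
      (iota X (x (j + 1)) • a j + a (j + 1) -
        iota X (x (j + 1) ◃ x j) • a (j + 1) + κ (x j) (x (j + 1))) with ha'
  have hps : posStep κ j (x, a) = (x', a') := rfl
  have hx'top : ∀ m, j + 1 < m → x' m = x m := by
    intro m hm
    rw [hx', Function.update_of_ne (by omega), Function.update_of_ne (by omega)]
  have hx'low : ∀ m, m < j → x' m = x m := by
    intro m hm
    rw [hx', Function.update_of_ne (by omega), Function.update_of_ne (by omega)]
  have hx'j : x' j = x (j + 1) := by
    rw [hx', Function.update_of_ne (by omega), Function.update_self]
  have hx'j1 : x' (j + 1) = x (j + 1) ◃ x j := by rw [hx', Function.update_self]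
  have ha'j : a' j = a (j + 1) := by
    rw [ha', Function.update_of_ne (by omega), Function.update_self]
  have ha'j1 : a' (j + 1) = iota X (x (j + 1)) • a j + a (j + 1) -
      iota X (x (j + 1) ◃ x j) • a (j + 1) + κ (x j) (x (j + 1)) := by
    rw [ha', Function.update_self]
  have hcoeff1 : coeff k (j + 1) x' = coeff k (j + 1) x := coeff_congr hx'top
  have hjk : j ∈ Finset.range k := Finset.mem_range.mpr (by omega)
  have hj1k : j + 1 ∈ (Finset.range k).erase j := by
    rw [Finset.mem_erase, Finset.mem_range]; exact ⟨by omega, by omega⟩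
  rw [hps]
  simp only [weightedSum, letterWeight]
  rw [← Finset.add_sum_erase _ (fun i => coeff k i (x', a').1 • (x', a').2 i) hjk,
    ← Finset.add_sum_erase _ (fun i => coeff k i (x', a').1 • (x', a').2 i) hj1k,
    ← Finset.add_sum_erase _ (fun i => coeff k i (x, a).1 • (x, a).2 i) hjk,
    ← Finset.add_sum_erase _ (fun i => coeff k i (x, a).1 • (x, a).2 i) hj1k]
  simp only
  have hsum : ∑ i ∈ ((Finset.range k).erase j).erase (j + 1), coeff k i x' • a' i =
      ∑ i ∈ ((Finset.range k).erase j).erase (j + 1), coeff k i x • a i := by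
    apply Finset.sum_congr rfl
    intro i hi
    rw [Finset.mem_erase, Finset.mem_erase] at hi
    obtain ⟨hi1, hi2, _⟩ := hi
    have hco : coeff k i x' = coeff k i x := by
      rcases lt_or_gt_of_ne hi2 with hlt | hgt
      · exact coeff_eq_of_braid h hx'top hx'j1 hx'j hx'low i hlt
      · exact coeff_congr fun m hm => by
          rw [hx', Function.update_of_ne (by omega), Function.update_of_ne (by omega)]
    have hai : a' i = a i := by
      rw [ha', Function.update_of_ne hi1, Function.update_of_ne hi2]
    rw [hco, hai]
  rw [hsum, ha'j, ha'j1]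
  have hcj : coeff k j x' = coeff k (j + 1) x * iota X (x (j + 1) ◃ x j) := by
    rw [coeff_succ h, hcoeff1, hx'j1]
  have hcjx : coeff k j x = coeff k (j + 1) x * iota X (x (j + 1)) := coeff_succ h x
  rw [hcj, hcjx, hcoeff1]
  simp only [mul_smul, smul_add, smul_sub]
  abel

lemma weightedSum_negStep {k j : ℕ} (h : j + 2 ≤ k)
    (neg : ℕ → (ℕ → X) × (ℕ → G) → (ℕ → X) × (ℕ → G))
    (hneg : Function.RightInverse (neg j) (posStep κ j))
    (s : (ℕ → X) × (ℕ → G)) :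
    weightedSum k (neg j s) = weightedSum k s + letterWeight κ k s.1 (j, false) := by
  set t := neg j s with ht
  have hps : posStep κ j t = s := hneg s
  have h1 := weightedSum_posStep κ h t
  rw [hps] at h1
  have hs1 : ∀ m, s.1 m = (posStep κ j t).1 m := by rw [hps]; intro m; rfl
  have hsj : s.1 j = t.1 (j + 1) := by
    rw [hs1 j]
    simp only [posStep]
    rw [Function.update_of_ne (by omega), Function.update_self]
  have hsj1 : s.1 (j + 1) = t.1 (j + 1) ◃ t.1 j := by
    rw [hs1 (j + 1)]
    simp only [posStep]
    rw [Function.update_self]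
  have hco : coeff k (j + 1) s.1 = coeff k (j + 1) t.1 := by
    apply coeff_congr
    intro m hm
    rw [hs1 m]
    simp only [posStep]
    rw [Function.update_of_ne (by omega), Function.update_of_ne (by omega)]
  have hLW : letterWeight κ k s.1 (j, false) = -(letterWeight κ k t.1 (j, true)) := by
    simp only [letterWeight]
    rw [hco, hsj, hsj1, Rack.invAct_act_eq]
  rw [hLW, h1]
  abel

lemma totalWeight_eq {k : ℕ}
    (neg : ℕ → (ℕ → X) × (ℕ → G) → (ℕ → X) × (ℕ → G))
    (hneg : ∀ j : ℕ, Function.LeftInverse (neg j) (posStep κ j) ∧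
      Function.RightInverse (neg j) (posStep κ j)) :
    ∀ (w : List (ℕ × Bool)), (∀ l ∈ w, l.1 + 2 ≤ k) →
      ∀ s, totalWeight κ (posStep κ) neg k w s =
        weightedSum k (wordAction (posStep κ) neg w s) - weightedSum k s := by
  intro w
  induction w with
  | nil => intro _ s; simp [totalWeight, wordAction]
  | cons l w ih =>
    intro hw s
    obtain ⟨j, b⟩ := l
    have hk : j + 2 ≤ k := hw (j, b) List.mem_cons_self
    simp only [totalWeight, wordAction]
    rw [ih (fun l hl => hw l (List.mem_cons_of_mem _ hl))]
    cases b
    · simp only [Bool.false_eq_true, if_false]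
      rw [weightedSum_negStep κ hk neg (hneg j).2 s]
      abel
    · simp only [if_true]
      rw [weightedSum_posStep κ hk s]
      abel

end Aux

/-- If a coloring of a closed braid (a bottom color vector `x⃗` whose induced top color
vector is again `x⃗`) extends to the extension quandle `G ×_α X`, i.e. there is a bead
vector `a⃗` with the braid word sending `(x⃗, a⃗)` to itself, then the sum of the
Boltzmann weights of all letters vanishes: such a coloring contributes a trivial term to
the generalized quandle cocycle invariant. -/
theorem extendable_coloring_totalWeight_eq_zero
    {X G : Type*} [Quandle X] [AddCommGroup G]
    [DistribMulAction (Rack.EnvelGroup X) G] (κ : X → X → G)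
    (k : ℕ) (neg : ℕ → (ℕ → X) × (ℕ → G) → (ℕ → X) × (ℕ → G))
    (hneg : ∀ j : ℕ, Function.LeftInverse (neg j) (posStep κ j) ∧
      Function.RightInverse (neg j) (posStep κ j))
    (w : List (ℕ × Bool)) (hw : ∀ l ∈ w, l.1 + 2 ≤ k)
    (x : ℕ → X) (a : ℕ → G)
    (hcolor : (wordAction (posStep κ) neg w (x, a)).1 = x)
    (hext : wordAction (posStep κ) neg w (x, a) = (x, a)) :
    totalWeight κ (posStep κ) neg k w (x, a) = 0 := by
  rw [totalWeight_eq κ neg hneg w hw (x, a), hext, sub_self]
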